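/- Let m and n be coprime positive integers and let r be a positive integer. Let F' be the set of pairs (ε, η) of injective functions from {1, …, r} to ℂ such that ε(1)⋯ε(r) = 1, η(1)⋯η(r) = 1, and ε(i)^n = η(j)^m for all i, j. Then F' is finite and n · m · |F'| = r · (n)_r · (m)_r, where (x)_r denotes the falling factorial x(x−1)⋯(x−r+1) (equal to 0 when r > x). -/

import Mathlib

open Polynomial in
lemma rootset_finite_card {k : ℕ} (hk : 0 < k) (w : ℂ) (hw : w ≠ 0) :
    {x : ℂ | x ^ k = w}.Finite ∧ Nat.card {x : ℂ | x ^ k = w} = k := by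
  have hprim : IsPrimitiveRoot (Complex.exp (2 * Real.pi * Complex.I / k)) k :=
    Complex.isPrimitiveRoot_exp k hk.ne'
  have hset : {x : ℂ | x ^ k = w} = ↑((nthRoots k w).toFinset) := by
    ext x
    simp [Polynomial.mem_nthRoots hk]
  have hcard : (nthRoots k w).toFinset.card = k := by
    rw [Multiset.toFinset_card_of_nodup (hprim.nthRoots_nodup hw)]
    rw [hprim.card_nthRoots w]
    exact if_pos (IsAlgClosed.exists_pow_nat_eq w hk)
  constructor
  · rw [hset]; exact (nthRoots k w).toFinset.finite_toSet
  · rw [hset, Nat.card_coe_set_eq, Set.ncard_coe_finset, hcard]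

lemma pow_congr_one (u : ℂ) (n k : ℕ) (hn : 0 < n) (hu : u ^ n = 1) (hk : k % n = 1 % n) :
    u ^ k = u := by
  conv_lhs => rw [← Nat.div_add_mod k n]
  rw [pow_add, pow_mul, hu, one_pow, one_mul, hk]
  rcases eq_or_lt_of_le (show 1 ≤ n from hn) with h1 | h1
  · have : u = 1 := by rw [← h1] at hu; simpa using hu
    simp [this]
  · rw [Nat.mod_eq_of_lt h1, pow_one]

lemma exists_scalers (m n r : ℕ) (hm : 0 < m) (hn : 0 < n) (hr : 0 < r)
    (hmn : Nat.Coprime m n) (u v : ℂ) (hu : u ^ n = 1) (hv : v ^ m = 1) :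
    ∃ α β : ℂ, α ^ r = u ∧ β ^ r = v ∧ α ^ n = β ^ m := by
  obtain ⟨z, hz⟩ := IsAlgClosed.exists_pow_nat_eq u hr
  obtain ⟨w, hw⟩ := IsAlgClosed.exists_pow_nat_eq v hr
  obtain ⟨m', hm'⟩ : ∃ m', m * m' % n = 1 % n := by
    rcases eq_or_lt_of_le (show 1 ≤ n from hn) with h1 | h1
    · exact ⟨1, by subst h1; simp [Nat.mod_one]⟩
    · obtain ⟨m', -, hm'⟩ := Nat.exists_mul_mod_eq_one_of_coprime hmn h1
      exact ⟨m', by rw [hm', Nat.mod_eq_of_lt h1]⟩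
  obtain ⟨n', hn'⟩ : ∃ n', n * n' % m = 1 % m := by
    rcases eq_or_lt_of_le (show 1 ≤ m from hm) with h1 | h1
    · exact ⟨1, by subst h1; simp [Nat.mod_one]⟩
    · obtain ⟨n', -, hn'⟩ := Nat.exists_mul_mod_eq_one_of_coprime hmn.symm h1
      exact ⟨n', by rw [hn', Nat.mod_eq_of_lt h1]⟩
  set x : ℂ := z ^ m' with hx
  set y : ℂ := w ^ n' with hy
  have hxmr : x ^ (m * r) = u := by
    rw [hx, ← pow_mul]
    calc z ^ (m' * (m * r)) = (z ^ r) ^ (m * m') := by ring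
    _ = u := by rw [hz]; exact pow_congr_one u n (m * m') hn hu hm'
  have hxnr : x ^ (n * r) = 1 := by
    rw [hx, ← pow_mul]
    calc z ^ (m' * (n * r)) = ((z ^ r) ^ n) ^ m' := by ring
    _ = 1 := by rw [hz, hu, one_pow]
  have hymr : y ^ (m * r) = 1 := by
    rw [hy, ← pow_mul]
    calc w ^ (n' * (m * r)) = ((w ^ r) ^ m) ^ n' := by ring
    _ = 1 := by rw [hw, hv, one_pow]
  have hynr : y ^ (n * r) = v := by
    rw [hy, ← pow_mul]
    calc w ^ (n' * (n * r)) = (w ^ r) ^ (n * n') := by ring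
    _ = v := by rw [hw]; exact pow_congr_one v m (n * n') hm hv hn'
  refine ⟨(x * y) ^ m, (x * y) ^ n, ?_, ?_, ?_⟩
  · have e1 : ((x * y) ^ m) ^ r = x ^ (m * r) * y ^ (m * r) := by
      rw [hx, hy]; ring
    rw [e1, hxmr, hymr, mul_one]
  · have e2 : ((x * y) ^ n) ^ r = x ^ (n * r) * y ^ (n * r) := by
      rw [hx, hy]; ring
    rw [e2, hxnr, hynr, one_mul]
  · rw [← pow_mul, ← pow_mul, mul_comm m n]

/-- Let `m` and `n` be coprime positive integers and `r` a positive integer. Let `F'` be the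
set of pairs `(ε, η)` of injective functions `Fin r → ℂ` with `∏ ε i = ∏ η j = 1` and
`ε(i)^n = η(j)^m` for all `i, j`. Then `F'` is finite and
`n · m · |F'| = r · (n)_r · (m)_r` where `(x)_r` is the falling factorial. -/
theorem stmt_4 (m n r : ℕ) (hm : 0 < m) (hn : 0 < n) (hr : 0 < r) (hmn : Nat.Coprime m n) :
    letI F' : Set ((Fin r → ℂ) × (Fin r → ℂ)) :=
      {p | Function.Injective p.1 ∧ Function.Injective p.2 ∧
        (∏ i, p.1 i) = 1 ∧ (∏ i, p.2 i) = 1 ∧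
        ∀ i j, p.1 i ^ n = p.2 j ^ m}
    F'.Finite ∧ n * m * Nat.card F' = r * n.descFactorial r * m.descFactorial r := by
  classical
  set F' : Set ((Fin r → ℂ) × (Fin r → ℂ)) :=
    {p | Function.Injective p.1 ∧ Function.Injective p.2 ∧
      (∏ i, p.1 i) = 1 ∧ (∏ i, p.2 i) = 1 ∧
      ∀ i j, p.1 i ^ n = p.2 j ^ m} with hF'
  set i0 : Fin r := ⟨0, hr⟩ with hi0
  -- the big set T
  set T : Set ((Fin r → ℂ) × (Fin r → ℂ)) :=
    {p | Function.Injective p.1 ∧ Function.Injective p.2 ∧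
      (∏ i, p.1 i) ^ n = 1 ∧ ∀ i j, p.1 i ^ n = p.2 j ^ m} with hT
  -- basic facts about elements of T
  have hTfacts : ∀ p : (Fin r → ℂ) × (Fin r → ℂ), p ∈ T →
      (∀ i, p.1 i ^ n = p.1 i0 ^ n) ∧ (∀ j, p.2 j ^ m = p.1 i0 ^ n) ∧
      (p.1 i0 ^ n) ^ r = 1 := by
    rintro p ⟨h1, h2, h3, h4⟩
    have heq : ∀ i, p.1 i ^ n = p.1 i0 ^ n := fun i => (h4 i i0).trans (h4 i0 i0).symm
    have heq2 : ∀ j, p.2 j ^ m = p.1 i0 ^ n := fun j => (h4 i0 j).symm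
    refine ⟨heq, heq2, ?_⟩
    calc (p.1 i0 ^ n) ^ r = ∏ _i : Fin r, p.1 i0 ^ n := by
          rw [Finset.prod_const, Finset.card_univ, Fintype.card_fin]
    _ = ∏ i, p.1 i ^ n := (Finset.prod_congr rfl fun i _ => (heq i).symm)
    _ = (∏ i, p.1 i) ^ n := by rw [Finset.prod_pow]
    _ = 1 := h3
  -- fibers over w
  set Tw : ℂ → Set ((Fin r → ℂ) × (Fin r → ℂ)) :=
    fun w => {p | Function.Injective p.1 ∧ Function.Injective p.2 ∧
      (∀ i, p.1 i ^ n = w) ∧ (∀ j, p.2 j ^ m = w)} with hTw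
  -- first equivalence: T ≃ Σ w, Tw w
  let E1 : ↥T ≃ Σ w : ↥{x : ℂ | x ^ r = 1}, ↥(Tw (w : ℂ)) :=
    { toFun := fun p =>
        ⟨⟨p.1.1 i0 ^ n, (hTfacts p.1 p.2).2.2⟩,
          ⟨p.1, ⟨p.2.1, p.2.2.1, (hTfacts p.1 p.2).1, (hTfacts p.1 p.2).2.1⟩⟩⟩
      invFun := fun q =>
        ⟨q.2.1, by
          obtain ⟨h1, h2, h3, h4⟩ := q.2.2
          refine ⟨h1, h2, ?_, fun i j => (h3 i).trans (h4 j).symm⟩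
          calc (∏ i, (q.2.1 : (Fin r → ℂ) × (Fin r → ℂ)).1 i) ^ n
              = ∏ i, (q.2.1 : (Fin r → ℂ) × (Fin r → ℂ)).1 i ^ n := by
                rw [Finset.prod_pow]
          _ = ∏ _i : Fin r, (q.1 : ℂ) := Finset.prod_congr rfl fun i _ => h3 i
          _ = (q.1 : ℂ) ^ r := by rw [Finset.prod_const, Finset.card_univ, Fintype.card_fin]
          _ = 1 := q.1.2⟩
      left_inv := fun p => rfl
      right_inv := by
        rintro ⟨⟨w, hw⟩, ⟨p, hp⟩⟩
        have h1 : p.1 i0 ^ n = w := hp.2.2.1 i0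
        subst h1
        rfl }
  -- per-w equivalence to embeddings
  have EW : ∀ w : ℂ, ↥(Tw w) ≃
      (Fin r ↪ ↥{x : ℂ | x ^ n = w}) × (Fin r ↪ ↥{x : ℂ | x ^ m = w}) := by
    intro w
    exact
    { toFun := fun p =>
        (⟨fun i => ⟨p.1.1 i, p.2.2.2.1 i⟩, fun a b h => p.2.1 (congrArg Subtype.val h)⟩,
         ⟨fun j => ⟨p.1.2 j, p.2.2.2.2 j⟩, fun a b h => p.2.2.1 (congrArg Subtype.val h)⟩)
      invFun := fun q =>
        ⟨(fun i => (q.1 i : ℂ), fun j => (q.2 j : ℂ)),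
          ⟨fun a b h => q.1.injective (Subtype.ext h),
           fun a b h => q.2.injective (Subtype.ext h),
           fun i => (q.1 i).2, fun j => (q.2 j).2⟩⟩
      left_inv := fun p => rfl
      right_inv := fun q => rfl }
  -- finiteness of T
  have hμr : {x : ℂ | x ^ r = 1}.Finite ∧ Nat.card {x : ℂ | x ^ r = 1} = r :=
    rootset_finite_card hr 1 one_ne_zero
  have hwne : ∀ w : ↥{x : ℂ | x ^ r = 1}, (w : ℂ) ≠ 0 := by
    rintro ⟨w, hw⟩ rfl
    exact one_ne_zero (by rw [← hw, zero_pow hr.ne'] : (1 : ℂ) = 0)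
  haveI : Finite ↥{x : ℂ | x ^ r = 1} := hμr.1.to_subtype
  haveI hfinw : ∀ w : ↥{x : ℂ | x ^ r = 1}, Finite ↥(Tw (w : ℂ)) := by
    intro w
    haveI : Finite ↥{x : ℂ | x ^ n = (w : ℂ)} :=
      ((rootset_finite_card hn (w : ℂ) (hwne w)).1).to_subtype
    haveI : Finite ↥{x : ℂ | x ^ m = (w : ℂ)} :=
      ((rootset_finite_card hm (w : ℂ) (hwne w)).1).to_subtype
    exact Finite.of_equiv _ (EW (w : ℂ)).symm
  haveI : Finite ↥T := Finite.of_equiv _ E1.symm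
  have hTfin : T.Finite := Set.toFinite T
  -- card of each Tw
  have hcardTw : ∀ w : ↥{x : ℂ | x ^ r = 1},
      Nat.card ↥(Tw (w : ℂ)) = n.descFactorial r * m.descFactorial r := by
    intro w
    haveI f1 : Finite ↥{x : ℂ | x ^ n = (w : ℂ)} :=
      ((rootset_finite_card hn (w : ℂ) (hwne w)).1).to_subtype
    haveI f2 : Finite ↥{x : ℂ | x ^ m = (w : ℂ)} :=
      ((rootset_finite_card hm (w : ℂ) (hwne w)).1).to_subtype
    haveI : Fintype ↥{x : ℂ | x ^ n = (w : ℂ)} := Fintype.ofFinite _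
    haveI : Fintype ↥{x : ℂ | x ^ m = (w : ℂ)} := Fintype.ofFinite _
    rw [Nat.card_congr (EW (w : ℂ))]
    rw [Nat.card_eq_fintype_card, Fintype.card_prod, Fintype.card_embedding_eq,
      Fintype.card_embedding_eq, Fintype.card_fin]
    have c1 : Fintype.card ↥{x : ℂ | x ^ n = (w : ℂ)} = n := by
      rw [← Nat.card_eq_fintype_card]
      exact (rootset_finite_card hn (w : ℂ) (hwne w)).2
    have c2 : Fintype.card ↥{x : ℂ | x ^ m = (w : ℂ)} = m := by
      rw [← Nat.card_eq_fintype_card]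
      exact (rootset_finite_card hm (w : ℂ) (hwne w)).2
    rw [c1, c2]
  -- card of T, first computation
  have hcardT1 : Nat.card ↥T = r * (n.descFactorial r * m.descFactorial r) := by
    rw [Nat.card_congr E1]
    haveI : Fintype ↥{x : ℂ | x ^ r = 1} := Fintype.ofFinite _
    haveI : ∀ w : ↥{x : ℂ | x ^ r = 1}, Fintype ↥(Tw (w : ℂ)) :=
      fun w => Fintype.ofFinite _
    rw [Nat.card_eq_fintype_card, Fintype.card_sigma]
    have hterm : ∀ w : ↥{x : ℂ | x ^ r = 1},
        Fintype.card ↥(Tw (w : ℂ)) = n.descFactorial r * m.descFactorial r := by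
      intro w
      rw [← Nat.card_eq_fintype_card]
      exact hcardTw w
    rw [Finset.sum_congr rfl (fun w _ => hterm w), Finset.sum_const, smul_eq_mul,
      Finset.card_univ, ← Nat.card_eq_fintype_card, hμr.2]
  -- second equivalence: fibers over (u, v)
  set Tuv : ↥{x : ℂ | x ^ n = 1} × ↥{x : ℂ | x ^ m = 1} → Set ((Fin r → ℂ) × (Fin r → ℂ)) :=
    fun q => {p | Function.Injective p.1 ∧ Function.Injective p.2 ∧
      (∏ i, p.1 i) = (q.1 : ℂ) ∧ (∏ i, p.2 i) = (q.2 : ℂ) ∧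
      ∀ i j, p.1 i ^ n = p.2 j ^ m} with hTuv
  have hprod2 : ∀ p : (Fin r → ℂ) × (Fin r → ℂ), p ∈ T → (∏ i, p.2 i) ^ m = 1 := by
    intro p hp
    obtain ⟨heq, heq2, hw⟩ := hTfacts p hp
    calc (∏ i, p.2 i) ^ m = ∏ j, p.2 j ^ m := by rw [Finset.prod_pow]
    _ = ∏ _j : Fin r, p.1 i0 ^ n := Finset.prod_congr rfl fun j _ => heq2 j
    _ = (p.1 i0 ^ n) ^ r := by rw [Finset.prod_const, Finset.card_univ, Fintype.card_fin]
    _ = 1 := hw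
  let E2 : ↥T ≃ Σ q : ↥{x : ℂ | x ^ n = 1} × ↥{x : ℂ | x ^ m = 1}, ↥(Tuv q) :=
    { toFun := fun p =>
        ⟨(⟨∏ i, p.1.1 i, p.2.2.2.1⟩, ⟨∏ i, p.1.2 i, hprod2 p.1 p.2⟩),
          ⟨p.1, ⟨p.2.1, p.2.2.1, rfl, rfl, p.2.2.2.2⟩⟩⟩
      invFun := fun q =>
        ⟨q.2.1, ⟨q.2.2.1, q.2.2.2.1, by rw [q.2.2.2.2.1]; exact q.1.1.2,
          q.2.2.2.2.2.2⟩⟩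
      left_inv := fun p => rfl
      right_inv := by
        rintro ⟨⟨⟨u, hu⟩, ⟨v, hv⟩⟩, ⟨p, hp⟩⟩
        have h1 : (∏ i, p.1 i) = u := hp.2.2.1
        have h2 : (∏ i, p.2 i) = v := hp.2.2.2.1
        subst h1
        subst h2
        rfl }
  -- each fiber has the same cardinality as F'
  have hfiber : ∀ q : ↥{x : ℂ | x ^ n = 1} × ↥{x : ℂ | x ^ m = 1},
      Nat.card ↥(Tuv q) = Nat.card ↥F' := by
    rintro ⟨⟨u, hu⟩, ⟨v, hv⟩⟩
    obtain ⟨α, β, hα, hβ, hαβ⟩ := exists_scalers m n r hm hn hr hmn u v hu hv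
    have hu0 : u ≠ 0 := fun h => one_ne_zero (by rw [← hu, h, zero_pow hn.ne'] : (1 : ℂ) = 0)
    have hv0 : v ≠ 0 := fun h => one_ne_zero (by rw [← hv, h, zero_pow hm.ne'] : (1 : ℂ) = 0)
    have hα0 : α ≠ 0 := fun h => hu0 (by rw [← hα, h, zero_pow hr.ne'])
    have hβ0 : β ≠ 0 := fun h => hv0 (by rw [← hβ, h, zero_pow hr.ne'])
    refine (Nat.card_congr ?_).symm
    exact
    { toFun := fun p =>
        ⟨(fun i => α * p.1.1 i, fun j => β * p.1.2 j), by
          obtain ⟨h1, h2, h3, h4, h5⟩ := p.2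
          refine ⟨fun a b h => h1 (mul_left_cancel₀ hα0 h),
            fun a b h => h2 (mul_left_cancel₀ hβ0 h), ?_, ?_, ?_⟩
          · show (∏ i, α * (p : (Fin r → ℂ) × (Fin r → ℂ)).1 i) = u
            calc (∏ i, α * (p : (Fin r → ℂ) × (Fin r → ℂ)).1 i)
                = (∏ _i : Fin r, α) * ∏ i, (p : (Fin r → ℂ) × (Fin r → ℂ)).1 i :=
                Finset.prod_mul_distrib
            _ = α ^ r * 1 := by
                rw [h3, Finset.prod_const, Finset.card_univ, Fintype.card_fin]
            _ = u := by rw [mul_one, hα]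
          · show (∏ i, β * (p : (Fin r → ℂ) × (Fin r → ℂ)).2 i) = v
            calc (∏ i, β * (p : (Fin r → ℂ) × (Fin r → ℂ)).2 i)
                = (∏ _i : Fin r, β) * ∏ i, (p : (Fin r → ℂ) × (Fin r → ℂ)).2 i :=
                Finset.prod_mul_distrib
            _ = β ^ r * 1 := by
                rw [h4, Finset.prod_const, Finset.card_univ, Fintype.card_fin]
            _ = v := by rw [mul_one, hβ]
          · intro i j
            show (α * (p : (Fin r → ℂ) × (Fin r → ℂ)).1 i) ^ n
                = (β * (p : (Fin r → ℂ) × (Fin r → ℂ)).2 j) ^ m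
            rw [mul_pow, mul_pow, hαβ, h5 i j]⟩
      invFun := fun p =>
        ⟨(fun i => α⁻¹ * p.1.1 i, fun j => β⁻¹ * p.1.2 j), by
          obtain ⟨h1, h2, h3, h4, h5⟩ := p.2
          have h3' : (∏ i, (p : (Fin r → ℂ) × (Fin r → ℂ)).1 i) = u := h3
          have h4' : (∏ i, (p : (Fin r → ℂ) × (Fin r → ℂ)).2 i) = v := h4
          refine ⟨fun a b h => h1 (mul_left_cancel₀ (inv_ne_zero hα0) h),
            fun a b h => h2 (mul_left_cancel₀ (inv_ne_zero hβ0) h), ?_, ?_, ?_⟩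
          · calc (∏ i, α⁻¹ * (p : (Fin r → ℂ) × (Fin r → ℂ)).1 i)
                = (∏ _i : Fin r, α⁻¹) * ∏ i, (p : (Fin r → ℂ) × (Fin r → ℂ)).1 i :=
                Finset.prod_mul_distrib
            _ = (α⁻¹) ^ r * u := by
                rw [h3', Finset.prod_const, Finset.card_univ, Fintype.card_fin]
            _ = 1 := by rw [inv_pow, hα, inv_mul_cancel₀ hu0]
          · calc (∏ i, β⁻¹ * (p : (Fin r → ℂ) × (Fin r → ℂ)).2 i)
                = (∏ _i : Fin r, β⁻¹) * ∏ i, (p : (Fin r → ℂ) × (Fin r → ℂ)).2 i :=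
                Finset.prod_mul_distrib
            _ = (β⁻¹) ^ r * v := by
                rw [h4', Finset.prod_const, Finset.card_univ, Fintype.card_fin]
            _ = 1 := by rw [inv_pow, hβ, inv_mul_cancel₀ hv0]
          · intro i j
            show (α⁻¹ * (p : (Fin r → ℂ) × (Fin r → ℂ)).1 i) ^ n
                = (β⁻¹ * (p : (Fin r → ℂ) × (Fin r → ℂ)).2 j) ^ m
            rw [mul_pow, mul_pow, inv_pow, inv_pow, hαβ, h5 i j]⟩
      left_inv := fun p => Subtype.ext (Prod.ext
        (funext fun i => inv_mul_cancel_left₀ hα0 _)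
        (funext fun j => inv_mul_cancel_left₀ hβ0 _))
      right_inv := fun p => Subtype.ext (Prod.ext
        (funext fun i => mul_inv_cancel_left₀ hα0 _)
        (funext fun j => mul_inv_cancel_left₀ hβ0 _)) }
  -- card of T, second computation
  haveI : Finite ↥{x : ℂ | x ^ n = 1} :=
    ((rootset_finite_card hn 1 one_ne_zero).1).to_subtype
  haveI : Finite ↥{x : ℂ | x ^ m = 1} :=
    ((rootset_finite_card hm 1 one_ne_zero).1).to_subtype
  have hcardT2 : Nat.card ↥T = n * m * Nat.card ↥F' := by
    rw [Nat.card_congr E2]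
    haveI : Fintype ↥{x : ℂ | x ^ n = 1} := Fintype.ofFinite _
    haveI : Fintype ↥{x : ℂ | x ^ m = 1} := Fintype.ofFinite _
    haveI hfq : ∀ q : ↥{x : ℂ | x ^ n = 1} × ↥{x : ℂ | x ^ m = 1}, Finite ↥(Tuv q) := by
      intro q
      have hsub : Tuv q ⊆ T := by
        rintro p ⟨h1, h2, h3, h4, h5⟩
        exact ⟨h1, h2, by rw [h3]; exact q.1.2, h5⟩
      exact (hTfin.subset hsub).to_subtype
    haveI : ∀ q : ↥{x : ℂ | x ^ n = 1} × ↥{x : ℂ | x ^ m = 1}, Fintype ↥(Tuv q) :=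
      fun q => Fintype.ofFinite _
    rw [Nat.card_eq_fintype_card, Fintype.card_sigma]
    have : ∀ q : ↥{x : ℂ | x ^ n = 1} × ↥{x : ℂ | x ^ m = 1},
        Fintype.card ↥(Tuv q) = Nat.card ↥F' := by
      intro q
      rw [← Nat.card_eq_fintype_card]
      exact hfiber q
    rw [Finset.sum_congr rfl (fun q _ => this q), Finset.sum_const, smul_eq_mul,
      Finset.card_univ, Fintype.card_prod, ← Nat.card_eq_fintype_card,
      ← Nat.card_eq_fintype_card, (rootset_finite_card hn 1 one_ne_zero).2,
      (rootset_finite_card hm 1 one_ne_zero).2]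
  -- conclude
  have hFsub : F' ⊆ T := by
    rintro p ⟨h1, h2, h3, h4, h5⟩
    exact ⟨h1, h2, by rw [h3, one_pow], h5⟩
  refine ⟨hTfin.subset hFsub, ?_⟩
  rw [← hcardT2, hcardT1]
  ring
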